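/- For every n, every permutation π of Fin n, and every assignment σ : Fin n → Bool, the permutation predicate PP(π)(σ) — defined as the conjunction over all i of the bit predicates BP(π,i)(σ) = [(∀ j < i, σ j = σ(π j)) → σ i ≤ σ(π i)] — holds if and only if σ ≤ σ ∘ π in the lexicographic order on assignments. -/

import Mathlib

/-- Lexicographic order on assignments `Fin n → Bool` (earlier indices more significant,
with `false < true`): `σ ≤ τ` iff `σ = τ` or there is an index `i` with `σ j = τ j`
for all `j < i`, `σ i = false` and `τ i = true`. -/
def lexLe {n : ℕ} (σ τ : Fin n → Bool) : Prop :=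
  σ = τ ∨ ∃ i : Fin n, (∀ j, j < i → σ j = τ j) ∧ σ i = false ∧ τ i = true

/-- Crawford's bit predicate `BP(π, i)(σ)`. -/
def BP {n : ℕ} (π : Equiv.Perm (Fin n)) (i : Fin n) (σ : Fin n → Bool) : Prop :=
  (∀ j, j < i → σ j = σ (π j)) → σ i ≤ σ (π i)

/-- Crawford's permutation predicate `PP(π)(σ)`, the conjunction of all bit predicates. -/
def PP {n : ℕ} (π : Equiv.Perm (Fin n)) (σ : Fin n → Bool) : Prop :=
  ∀ i : Fin n, BP π i σ

/-- The permutation predicate `PP(π)` holds at `σ` iff `σ ≤ σ ∘ π` in lexicographic order. -/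
theorem stmt_3 {n : ℕ} (π : Equiv.Perm (Fin n)) (σ : Fin n → Bool) :
    PP π σ ↔ lexLe σ (σ ∘ π) := by
  constructor
  · intro h
    by_cases heq : ∀ i, σ i = σ (π i)
    · left; funext i; exact heq i
    · right
      push_neg at heq
      obtain ⟨i0, hi0⟩ := heq
      set S := Finset.univ.filter (fun i : Fin n => σ i ≠ σ (π i)) with hS
      have hne : S.Nonempty := ⟨i0, by simp [hS, hi0]⟩
      set m := S.min' hne with hm
      have hmS : m ∈ S := S.min'_mem hne
      have hmne : σ m ≠ σ (π m) := by simpa [hS] using hmS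
      have hagree : ∀ j, j < m → σ j = σ (π j) := by
        intro j hj
        by_contra hc
        have : m ≤ j := S.min'_le j (by simp [hS, hc])
        exact absurd hj (not_lt.mpr this)
      have hle := h m hagree
      refine ⟨m, fun j hj => hagree j hj, ?_, ?_⟩
      · cases hs : σ m <;> cases ht : σ (π m) <;> rw [hs, ht] at hle hmne <;> revert hle hmne <;> decide
      · show σ (π m) = true
        cases hs : σ m <;> cases ht : σ (π m) <;> rw [hs, ht] at hle hmne <;> revert hle hmne <;> decide
  · rintro (heq | ⟨i, hagree, hfi, hti⟩)
    · intro k _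
      have := congrFun heq k
      simp only [Function.comp] at this
      simp [this]
    · intro k hk
      rcases lt_trichotomy k i with h | h | h
      · have := hagree k h
        simp only [Function.comp] at this
        simp [this]
      · subst h; simp [hfi]
      · have := hk i h
        simp only [Function.comp] at hti
        rw [hti] at this
        simp [hfi] at this
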